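/- For x_n = 1 + 5/M_n, y_n = 1 + 1/M_n, and a ≠ 1 fixed, with L_n/M_n → λ and M_n → ∞, the normalized double sum (n₀²/(M_n² L_n² a^{2(L_n−1)}))·∑_{1≤ℓ₁<ℓ₂≤L_n} a^{2(L_n−1)}·x_n^{L_n−1−(ℓ₂−ℓ₁)}·y_n^{ℓ₂−ℓ₁}·(M_n²/n₀²) converges to e^{5λ}·(1/(4λ) − 1/(16λ²)) + e^{λ}/(16λ²). -/

import Mathlib

open Filter Finset Real


lemma geom_inner {r : ℝ} (hr : r ≠ 1) (c : ℕ) :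
    ∑ ℓ₁ ∈ Finset.Ico 1 c, r ^ (c - ℓ₁) = r * ((r ^ (c - 1) - 1) / (r - 1)) := by
  have h1 : ∑ ℓ₁ ∈ Finset.Ico 1 c, r ^ (c - ℓ₁) = ∑ j ∈ Finset.Ico 1 c, r ^ j := by
    refine Finset.sum_nbij' (fun k => c - k) (fun k => c - k) ?_ ?_ ?_ ?_ ?_ <;>
      intro a ha <;> simp only [Finset.mem_Ico] at * <;> omega
  rw [h1, Finset.sum_Ico_eq_sum_range]
  have h2 : ∀ k, r ^ (1 + k) = r * r ^ k := fun k => by rw [pow_add, pow_one]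
  simp only [h2, ← Finset.mul_sum, geom_sum_eq hr]

lemma closed_form (a α₀ : ℝ) (ha : a ≠ 0) (hα : α₀ ≠ 0) (m : ℝ) (hm : 0 < m)
    (Lv : ℕ) (hL : 1 ≤ Lv) :
    ((α₀ * m) ^ 2 / (m ^ 2 * (Lv : ℝ) ^ 2 * a ^ (2 * (Lv - 1)))) *
      ∑ ℓ₂ ∈ Finset.Icc 1 Lv, ∑ ℓ₁ ∈ Finset.Ico 1 ℓ₂,
        a ^ (2 * (Lv - 1)) * (1 + 5 / m) ^ (Lv - 1 - (ℓ₂ - ℓ₁)) *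
          (1 + 1 / m) ^ (ℓ₂ - ℓ₁) * (m ^ 2 / (α₀ * m) ^ 2)
    = (1 + 5 / m) ^ (Lv - 1) *
        (((1 + 1 / m) / (1 + 5 / m)) *
          ((((1 + 1 / m) / (1 + 5 / m)) ^ Lv - 1) /
              ((Lv : ℝ) * (((1 + 1 / m) / (1 + 5 / m)) - 1)) ^ 2
            - 1 / ((Lv : ℝ) * (((1 + 1 / m) / (1 + 5 / m)) - 1)))) := by
  set x : ℝ := 1 + 5 / m with hxdef
  set y : ℝ := 1 + 1 / m with hydef
  have hx : (0:ℝ) < x := by positivity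
  have hy : (0:ℝ) < y := by positivity
  have hyx : y < x := by
    have h : (1:ℝ)/m < 5/m := by
      apply div_lt_div_of_pos_right _ hm
      norm_num
    simpa [hxdef, hydef] using h
  set r : ℝ := y / x with hrdef
  have hr1 : r < 1 := (div_lt_one hx).2 hyx
  have hrne : r ≠ 1 := ne_of_lt hr1
  have hrsub : r - 1 ≠ 0 := sub_ne_zero.2 hrne
  have hLne : (Lv:ℝ) ≠ 0 := Nat.cast_ne_zero.2 (by omega)
  have key : ∑ ℓ₂ ∈ Finset.Icc 1 Lv, ∑ ℓ₁ ∈ Finset.Ico 1 ℓ₂,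
        a ^ (2 * (Lv - 1)) * x ^ (Lv - 1 - (ℓ₂ - ℓ₁)) * y ^ (ℓ₂ - ℓ₁) * (m ^ 2 / (α₀ * m) ^ 2)
      = (a ^ (2 * (Lv - 1)) * (m ^ 2 / (α₀ * m) ^ 2) * x ^ (Lv - 1)) *
          ∑ ℓ₂ ∈ Finset.Icc 1 Lv, ∑ ℓ₁ ∈ Finset.Ico 1 ℓ₂, r ^ (ℓ₂ - ℓ₁) := by
    rw [Finset.mul_sum]
    refine Finset.sum_congr rfl fun ℓ₂ h₂ => ?_
    rw [Finset.mul_sum]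
    refine Finset.sum_congr rfl fun ℓ₁ h₁ => ?_
    simp only [Finset.mem_Icc, Finset.mem_Ico] at h₂ h₁
    have hd : ℓ₂ - ℓ₁ ≤ Lv - 1 := by omega
    have hps : x ^ (Lv - 1 - (ℓ₂ - ℓ₁)) * x ^ (ℓ₂ - ℓ₁) = x ^ (Lv - 1) :=
      pow_sub_mul_pow x hd
    rw [hrdef, div_pow, ← hps]
    field_simp
  have outer : ∑ ℓ₂ ∈ Finset.Icc 1 Lv, ∑ ℓ₁ ∈ Finset.Ico 1 ℓ₂, r ^ (ℓ₂ - ℓ₁)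
      = r * (((r ^ Lv - 1) / (r - 1) - (Lv:ℝ)) / (r - 1)) := by
    have h1 : ∀ ℓ₂ ∈ Finset.Icc 1 Lv, ∑ ℓ₁ ∈ Finset.Ico 1 ℓ₂, r ^ (ℓ₂ - ℓ₁)
        = r * ((r ^ (ℓ₂ - 1) - 1) / (r - 1)) := fun ℓ₂ _ => geom_inner hrne ℓ₂
    rw [Finset.sum_congr rfl h1]
    have h2 : ∑ ℓ₂ ∈ Finset.Icc 1 Lv, r ^ (ℓ₂ - 1) = (r ^ Lv - 1)/(r - 1) := by
      rw [← Finset.Ico_add_one_right_eq_Icc, Finset.sum_Ico_eq_sum_range]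
      simp only [Nat.add_sub_cancel_left, Nat.add_sub_cancel]
      exact geom_sum_eq hrne Lv
    rw [← Finset.mul_sum, ← Finset.sum_div, Finset.sum_sub_distrib, Finset.sum_const,
      Nat.card_Icc, h2]
    norm_num
  rw [key, outer]
  have haE : a ^ (2 * (Lv - 1)) ≠ 0 := pow_ne_zero _ ha
  field_simp

lemma mixed_aux_tendsto (lam : ℝ) (hlam : 0 < lam) (M L : ℕ → ℕ)
    (hM : Tendsto (fun n => (M n : ℝ)) atTop atTop)
    (hL : Tendsto (fun n => (L n : ℝ)) atTop atTop)
    (hratio : Tendsto (fun n => (L n : ℝ) / (M n : ℝ)) atTop (nhds lam)) :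
    Tendsto (fun n => (1 + 5 / (M n : ℝ)) ^ (L n - 1) *
        (((1 + 1 / (M n:ℝ)) / (1 + 5 / (M n:ℝ))) *
          ((((1 + 1 / (M n:ℝ)) / (1 + 5 / (M n:ℝ))) ^ L n - 1) /
              ((L n : ℝ) * (((1 + 1 / (M n:ℝ)) / (1 + 5 / (M n:ℝ))) - 1)) ^ 2
            - 1 / ((L n : ℝ) * (((1 + 1 / (M n:ℝ)) / (1 + 5 / (M n:ℝ))) - 1)))))
      atTop
      (nhds (Real.exp (5 * lam) * (1 *
        ((Real.exp (-(4 * lam)) - 1) / (-(4 * lam)) ^ 2 - 1 / (-(4 * lam)))))) := by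
  have hM1 : ∀ᶠ n in atTop, 1 ≤ M n := by
    filter_upwards [hM.eventually_ge_atTop 1] with n hn
    exact_mod_cast hn
  have hL1 : ∀ᶠ n in atTop, 1 ≤ L n := by
    filter_upwards [hL.eventually_ge_atTop 1] with n hn
    exact_mod_cast hn
  have hxpos : ∀ n, (0:ℝ) < 1 + 5 / (M n : ℝ) := by
    intro n; positivity
  have hypos : ∀ n, (0:ℝ) < 1 + 1 / (M n : ℝ) := by
    intro n; positivity
  have hinv : Tendsto (fun n => ((M n : ℝ))⁻¹) atTop (nhds 0) := hM.inv_tendsto_atTop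
  have hx1 : Tendsto (fun n => 1 + 5 / (M n : ℝ)) atTop (nhds 1) := by
    have := (hinv.const_mul 5).const_add 1
    simpa [div_eq_mul_inv] using this
  have hy1 : Tendsto (fun n => 1 + 1 / (M n : ℝ)) atTop (nhds 1) := by
    have := (hinv.const_mul 1).const_add 1
    simpa [div_eq_mul_inv] using this
  -- log limits
  have hlog : ∀ t : ℝ, Tendsto (fun n => (M n : ℝ) * Real.log (1 + t / (M n : ℝ)))
      atTop (nhds t) := fun t => (Real.tendsto_mul_log_one_add_div_atTop t).comp hM
  have hLlog : ∀ t : ℝ, Tendsto (fun n => (L n : ℝ) * Real.log (1 + t / (M n : ℝ)))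
      atTop (nhds (lam * t)) := by
    intro t
    have h := hratio.mul (hlog t)
    apply h.congr'
    filter_upwards [hM1] with n hn
    have hMne : (M n : ℝ) ≠ 0 := by positivity
    field_simp
  have hlogx0 : ∀ t : ℝ, Tendsto (fun n => Real.log (1 + t / (M n : ℝ))) atTop (nhds 0) := by
    intro t
    have : Tendsto (fun n => 1 + t / (M n : ℝ)) atTop (nhds 1) := by
      have := (hinv.const_mul t).const_add 1
      simpa [div_eq_mul_inv] using this
    simpa [Function.comp_def] using ((Real.continuousAt_log (by norm_num)).tendsto.comp this)
  -- f1
  have f1 : Tendsto (fun n => (1 + 5 / (M n : ℝ)) ^ (L n - 1)) atTop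
      (nhds (Real.exp (5 * lam))) := by
    have hexp : ∀ n, (1 + 5 / (M n : ℝ)) ^ (L n - 1)
        = Real.exp (((L n - 1 : ℕ) : ℝ) * Real.log (1 + 5 / (M n : ℝ))) := by
      intro n
      rw [Real.exp_nat_mul, Real.exp_log (hxpos n)]
    have harg : Tendsto (fun n => ((L n - 1 : ℕ) : ℝ) * Real.log (1 + 5 / (M n : ℝ)))
        atTop (nhds (5 * lam)) := by
      have h := (hLlog 5).sub (hlogx0 5)
      rw [show lam * 5 - 0 = 5 * lam by ring] at h
      apply h.congr'
      filter_upwards [hL1] with n hn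
      rw [Nat.cast_sub hn]
      push_cast
      ring
    simp only [hexp]
    exact (Real.continuous_exp.tendsto _).comp harg
  -- f3
  have f3 : Tendsto (fun n => ((1 + 1 / (M n:ℝ)) / (1 + 5 / (M n:ℝ))) ^ L n) atTop
      (nhds (Real.exp (-(4 * lam)))) := by
    have hexp : ∀ n, ((1 + 1 / (M n:ℝ)) / (1 + 5 / (M n:ℝ))) ^ L n
        = Real.exp ((L n : ℝ) * (Real.log (1 + 1 / (M n:ℝ)) - Real.log (1 + 5 / (M n:ℝ)))) := by
      intro n
      rw [Real.exp_nat_mul, ← Real.log_div (hypos n).ne' (hxpos n).ne',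
        Real.exp_log (div_pos (hypos n) (hxpos n))]
    have harg : Tendsto (fun n => (L n : ℝ) * (Real.log (1 + 1 / (M n:ℝ)) - Real.log (1 + 5 / (M n:ℝ))))
        atTop (nhds (-(4 * lam))) := by
      have h := (hLlog 1).sub (hLlog 5)
      rw [show lam * 1 - lam * 5 = -(4 * lam) by ring] at h
      apply h.congr
      intro n; ring
    simp only [hexp]
    exact (Real.continuous_exp.tendsto _).comp harg
  -- f4
  have f4 : Tendsto (fun n => (L n : ℝ) * (((1 + 1 / (M n:ℝ)) / (1 + 5 / (M n:ℝ))) - 1)) atTop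
      (nhds (-(4 * lam))) := by
    have h := ((hratio.const_mul (-4)).mul (hx1.inv₀ one_ne_zero))
    rw [show (-4) * lam * 1⁻¹ = -(4 * lam) by norm_num] at h
    apply h.congr'
    filter_upwards [hM1] with n hn
    have hMne : (M n : ℝ) ≠ 0 := by
      have : (0:ℝ) < M n := by exact_mod_cast Nat.lt_of_lt_of_le Nat.zero_lt_one hn
      exact this.ne'
    field_simp
    ring
  -- f2
  have f2 : Tendsto (fun n => (1 + 1 / (M n:ℝ)) / (1 + 5 / (M n:ℝ))) atTop (nhds 1) := by
    have := hy1.div hx1 one_ne_zero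
    simpa [Pi.div_def] using this
  have h4ne : -(4 * lam) ≠ 0 := by
    have : (0:ℝ) < 4 * lam := by positivity
    exact (neg_ne_zero.2 this.ne')
  have h4sq : (-(4 * lam)) ^ 2 ≠ 0 := pow_ne_zero _ h4ne
  exact f1.mul (f2.mul ((((f3.sub tendsto_const_nhds).div (f4.pow 2) h4sq)).sub
    (tendsto_const_nhds.div f4 h4ne)))


/-- The normalized mixed-term double sum appearing in the second moment of `Θ_W`
converges to `e^{5λ}·(1/(4λ) − 1/(16λ²)) + e^{λ}/(16λ²)` in the
infinite-depth-and-width limit. -/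
theorem mixed_sum_limit (a : ℝ) (ha0 : a ≠ 0) (ha1 : a ≠ 1)
    (α₀ : ℝ) (hα₀ : 0 < α₀) (lam : ℝ) (hlam : 0 < lam)
    (M L : ℕ → ℕ)
    (hM : Tendsto (fun n => (M n : ℝ)) atTop atTop)
    (hL : Tendsto (fun n => (L n : ℝ)) atTop atTop)
    (hratio : Tendsto (fun n => (L n : ℝ) / (M n : ℝ)) atTop (nhds lam)) :
    Tendsto (fun n =>
        ((α₀ * (M n : ℝ)) ^ 2 / ((M n : ℝ) ^ 2 * (L n : ℝ) ^ 2 * a ^ (2 * (L n - 1)))) *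
        ∑ ℓ₂ ∈ Finset.Icc 1 (L n), ∑ ℓ₁ ∈ Finset.Ico 1 ℓ₂,
          a ^ (2 * (L n - 1)) * (1 + 5 / (M n : ℝ)) ^ (L n - 1 - (ℓ₂ - ℓ₁)) *
            (1 + 1 / (M n : ℝ)) ^ (ℓ₂ - ℓ₁) * ((M n : ℝ) ^ 2 / (α₀ * (M n : ℝ)) ^ 2))
      atTop
      (nhds (Real.exp (5 * lam) * (1 / (4 * lam) - 1 / (16 * lam ^ 2)) +
        Real.exp lam / (16 * lam ^ 2))) := by
  have hM1 : ∀ᶠ n in atTop, 1 ≤ M n := by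
    filter_upwards [hM.eventually_ge_atTop 1] with n hn
    exact_mod_cast hn
  have hL1 : ∀ᶠ n in atTop, 1 ≤ L n := by
    filter_upwards [hL.eventually_ge_atTop 1] with n hn
    exact_mod_cast hn
  have hV : Real.exp (5 * lam) * (1 *
        ((Real.exp (-(4 * lam)) - 1) / (-(4 * lam)) ^ 2 - 1 / (-(4 * lam))))
      = Real.exp (5 * lam) * (1 / (4 * lam) - 1 / (16 * lam ^ 2)) +
        Real.exp lam / (16 * lam ^ 2) := by
    have hE : Real.exp (5 * lam) * Real.exp (-(4 * lam)) = Real.exp lam := by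
      rw [← Real.exp_add]; congr 1; ring
    have hl : lam ≠ 0 := hlam.ne'
    field_simp
    rw [show -(lam * 4) = -(4 * lam) by ring]
    linear_combination 16 * hE
  rw [← hV]
  apply Tendsto.congr' _ (mixed_aux_tendsto lam hlam M L hM hL hratio)
  filter_upwards [hM1, hL1] with n hm hl
  have hmpos : (0:ℝ) < (M n : ℝ) := by exact_mod_cast Nat.lt_of_lt_of_le Nat.zero_lt_one hm
  exact (closed_form a α₀ ha0 hα₀.ne' (M n : ℝ) hmpos (L n) hl).symm
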